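/- For every real number x with 0 ≤ x ≤ 1, the inequalities arcsin x ≤ π(√2 + 1/2)·(√(1 + x) − √(1 − x))/(4 + √(1 + x) + √(1 − x)) ≤ πx/(2 + √(1 − x²)) hold. -/

import Mathlib

open Real

private noncomputable def zhuF : ℝ → ℝ :=
  fun φ => Real.pi * (Real.sqrt 2 + 1 / 2) * Real.sin φ - 2 * φ * (2 + Real.cos φ)

private lemma zhuF_deriv1 (y : ℝ) :
    HasDerivAt zhuF
      (Real.pi * (Real.sqrt 2 + 1 / 2) * Real.cos y - (2 * (2 + Real.cos y) +
        2 * y * (-Real.sin y))) y := by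
  have h1 := (Real.hasDerivAt_sin y).const_mul (Real.pi * (Real.sqrt 2 + 1 / 2))
  have h2 := ((hasDerivAt_id y).const_mul (2 : ℝ)).mul
    ((hasDerivAt_const y (2 : ℝ)).add (Real.hasDerivAt_cos y))
  refine (h1.sub h2).congr_deriv ?_
  simp only [id_eq, Pi.add_apply]
  ring

private lemma zhuF_deriv2 (y : ℝ) :
    HasDerivAt (fun z => Real.pi * (Real.sqrt 2 + 1 / 2) * Real.cos z - (2 * (2 + Real.cos z) +
        2 * z * (-Real.sin z)))
      ((4 - Real.pi * (Real.sqrt 2 + 1 / 2)) * Real.sin y + 2 * y * Real.cos y) y := by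
  have h1 := (Real.hasDerivAt_cos y).const_mul (Real.pi * (Real.sqrt 2 + 1 / 2))
  have h2 := (Real.hasDerivAt_cos y).const_mul (2 : ℝ)
  have h3 := ((hasDerivAt_id y).const_mul (2 : ℝ)).mul ((Real.hasDerivAt_sin y).neg)
  have h4 : HasDerivAt (fun z => 2 * (2 + Real.cos z) + 2 * z * (-Real.sin z))
      (2 * (-Real.sin y) + (2 * 1 * (-Real.sin y) + 2 * y * (-Real.cos y))) y := by
    have h2' : HasDerivAt (fun z => 2 * (2 + Real.cos z)) (2 * (-Real.sin y)) y := by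
      have := ((hasDerivAt_const y (2 : ℝ)).add (Real.hasDerivAt_cos y)).const_mul (2 : ℝ)
      refine this.congr_deriv ?_
      ring
    exact h2'.add h3
  refine (h1.sub h4).congr_deriv ?_
  ring

private lemma zhu_C_ge_six : (6 : ℝ) ≤ Real.pi * (Real.sqrt 2 + 1 / 2) := by
  have h1 : (3.141592 : ℝ) < Real.pi := Real.pi_gt_d6
  have h2 : (1.414 : ℝ) ≤ Real.sqrt 2 := by
    rw [show (2 : ℝ) = 1.414 ^ 2 + 0.000604 by norm_num]
    nlinarith [Real.sq_sqrt (by norm_num : (0:ℝ) ≤ 1.414 ^ 2 + 0.000604),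
      Real.sqrt_nonneg (1.414 ^ 2 + 0.000604)]
  nlinarith

private lemma zhu_key (φ : ℝ) (h0 : 0 ≤ φ) (h1 : φ ≤ Real.pi / 4) :
    2 * φ * (2 + Real.cos φ) ≤ Real.pi * (Real.sqrt 2 + 1 / 2) * Real.sin φ := by
  have hpi : (0 : ℝ) < Real.pi := Real.pi_pos
  have hconc : StrictConcaveOn ℝ (Set.Icc 0 (Real.pi / 4)) zhuF := by
    apply strictConcaveOn_of_deriv2_neg (convex_Icc _ _)
    · unfold zhuF; fun_prop
    · intro y hy
      rw [interior_Icc] at hy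
      have hd1 : deriv zhuF = fun z => Real.pi * (Real.sqrt 2 + 1 / 2) * Real.cos z -
          (2 * (2 + Real.cos z) + 2 * z * (-Real.sin z)) :=
        funext fun z => (zhuF_deriv1 z).deriv
      have : deriv^[2] zhuF y =
          (4 - Real.pi * (Real.sqrt 2 + 1 / 2)) * Real.sin y + 2 * y * Real.cos y := by
        rw [Function.iterate_succ, Function.iterate_one, Function.comp_apply, hd1]
        exact (zhuF_deriv2 y).deriv
      rw [this]
      have hy0 : 0 < y := hy.1
      have hy2 : y < Real.pi / 2 := lt_trans hy.2 (by linarith)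
      have hcos : 0 < Real.cos y := Real.cos_pos_of_mem_Ioo ⟨by linarith, hy2⟩
      have hsin : 0 < Real.sin y := Real.sin_pos_of_pos_of_lt_pi hy0 (by linarith)
      have htan : y < Real.tan y := Real.lt_tan hy0 hy2
      rw [Real.tan_eq_sin_div_cos] at htan
      have hyc : y * Real.cos y < Real.sin y := by
        rwa [lt_div_iff₀ hcos] at htan
      nlinarith [zhu_C_ge_six]
  have hmem0 : (0 : ℝ) ∈ Set.Icc (0 : ℝ) (Real.pi / 4) := by
    constructor <;> [rfl; positivity]
  have hmem1 : Real.pi / 4 ∈ Set.Icc (0 : ℝ) (Real.pi / 4) := by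
    constructor <;> [positivity; rfl]
  have hF0 : zhuF 0 = 0 := by simp [zhuF]
  have hFpi4 : zhuF (Real.pi / 4) = 0 := by
    unfold zhuF
    rw [Real.sin_pi_div_four, Real.cos_pi_div_four]
    have hs2 : Real.sqrt 2 ^ 2 = 2 := Real.sq_sqrt (by norm_num)
    nlinarith [hs2]
  set t : ℝ := φ / (Real.pi / 4) with ht
  have ht0 : 0 ≤ t := by positivity
  have ht1 : t ≤ 1 := by
    rw [ht, div_le_one (by positivity)]; exact h1
  have hcomb := hconc.concaveOn.2 hmem0 hmem1 (by linarith : (0:ℝ) ≤ 1 - t) ht0 (by ring)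
  have hφeq : (1 - t) • (0 : ℝ) + t • (Real.pi / 4) = φ := by
    simp [smul_eq_mul, ht]
  rw [hφeq, hF0, hFpi4] at hcomb
  simp only [smul_eq_mul, mul_zero, add_zero] at hcomb
  have : 0 ≤ zhuF φ := by linarith
  unfold zhuF at this
  linarith

private lemma zhu_key2 (s c : ℝ) (hs0 : 0 ≤ s) (hsc : s ≤ c) (hc1 : c ≤ 1)
    (hpyth : s ^ 2 + c ^ 2 = 1) :
    Real.pi * (Real.sqrt 2 + 1 / 2) * (2 * s) * (2 + (c ^ 2 - s ^ 2)) ≤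
      Real.pi * (2 * s * c) * (4 + 2 * c) := by
  have hsq2 : Real.sqrt 2 ^ 2 = 2 := Real.sq_sqrt (by norm_num)
  have hs2a : (1.414 : ℝ) ≤ Real.sqrt 2 := by nlinarith [Real.sqrt_nonneg 2]
  have hs2b : Real.sqrt 2 ≤ 1.415 := by nlinarith [Real.sqrt_nonneg 2]
  have hc0 : 0 ≤ c := le_trans hs0 hsc
  have hchalf : Real.sqrt 2 / 2 ≤ c := by nlinarith
  have hA : 0 ≤ (c - Real.sqrt 2 / 2) * (1 - c) := by nlinarith
  have hB : 0 ≤ c - Real.sqrt 2 / 2 := by linarith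
  have h : (Real.sqrt 2 + 1 / 2) * ((2 * s) * (2 + (c ^ 2 - s ^ 2))) ≤
      (2 * s * c) * (4 + 2 * c) := by
    nlinarith [mul_nonneg hs0 hA, mul_nonneg hs0 hB, mul_nonneg hs0 hc0]
  calc Real.pi * (Real.sqrt 2 + 1 / 2) * (2 * s) * (2 + (c ^ 2 - s ^ 2))
      = Real.pi * ((Real.sqrt 2 + 1 / 2) * ((2 * s) * (2 + (c ^ 2 - s ^ 2)))) := by ring
    _ ≤ Real.pi * ((2 * s * c) * (4 + 2 * c)) :=
        mul_le_mul_of_nonneg_left h Real.pi_pos.le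
    _ = Real.pi * (2 * s * c) * (4 + 2 * c) := by ring

theorem zhu_upper_bounds (x : ℝ) (hx : 0 ≤ x) (hx' : x ≤ 1) :
    Real.arcsin x ≤
      Real.pi * (Real.sqrt 2 + 1 / 2) * (Real.sqrt (1 + x) - Real.sqrt (1 - x)) /
        (4 + Real.sqrt (1 + x) + Real.sqrt (1 - x)) ∧
    Real.pi * (Real.sqrt 2 + 1 / 2) * (Real.sqrt (1 + x) - Real.sqrt (1 - x)) /
        (4 + Real.sqrt (1 + x) + Real.sqrt (1 - x)) ≤
      Real.pi * x / (2 + Real.sqrt (1 - x ^ 2)) := by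
  have hpi : (0 : ℝ) < Real.pi := Real.pi_pos
  set θ := Real.arcsin x with hθ
  have hθ0 : 0 ≤ θ := Real.arcsin_nonneg.2 hx
  have hθ2 : θ ≤ Real.pi / 2 := Real.arcsin_le_pi_div_two x
  have hsinθ : Real.sin θ = x := Real.sin_arcsin (by linarith) hx'
  have hcosθ : Real.cos θ = Real.sqrt (1 - x ^ 2) := Real.cos_arcsin x
  set φ := θ / 2 with hφ
  set s := Real.sin φ with hsdef
  set c := Real.cos φ with hcdef
  have hφ0 : 0 ≤ φ := by positivity
  have hφ1 : φ ≤ Real.pi / 4 := by rw [hφ]; linarith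
  have hs0 : 0 ≤ s := Real.sin_nonneg_of_nonneg_of_le_pi hφ0 (by linarith)
  have hc0 : 0 < c := Real.cos_pos_of_mem_Ioo ⟨by linarith, by linarith⟩
  have hpyth : s ^ 2 + c ^ 2 = 1 := Real.sin_sq_add_cos_sq φ
  have h2φ : 2 * φ = θ := by rw [hφ]; ring
  have hx2sc : x = 2 * s * c := by
    rw [← hsinθ, ← h2φ, Real.sin_two_mul]
  have hcs2 : c ^ 2 - s ^ 2 = Real.cos θ := by
    rw [← h2φ, Real.cos_two_mul]; nlinarith
  have hcosθ0 : 0 ≤ Real.cos θ :=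
    Real.cos_nonneg_of_mem_Icc ⟨by linarith, hθ2⟩
  have hsc : s ≤ c := by nlinarith
  have ha : Real.sqrt (1 + x) = c + s := by
    rw [show 1 + x = (c + s) ^ 2 by nlinarith]
    exact Real.sqrt_sq (by linarith)
  have hb : Real.sqrt (1 - x) = c - s := by
    rw [show 1 - x = (c - s) ^ 2 by nlinarith]
    exact Real.sqrt_sq (by linarith)
  have hab : Real.sqrt (1 - x ^ 2) = c ^ 2 - s ^ 2 := by
    rw [← hcosθ, hcs2]
  rw [ha, hb, hab]
  have e1 : c + s - (c - s) = 2 * s := by ring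
  have e2 : 4 + (c + s) + (c - s) = 4 + 2 * c := by ring
  rw [e1, e2]
  have hden1 : (0 : ℝ) < 4 + 2 * c := by linarith
  have hden2 : (0 : ℝ) < 2 + (c ^ 2 - s ^ 2) := by nlinarith
  have hkey := zhu_key φ hφ0 hφ1
  constructor
  · rw [le_div_iff₀ hden1, ← h2φ]
    calc 2 * φ * (4 + 2 * c) = 2 * (2 * φ * (2 + c)) := by ring
      _ ≤ 2 * (Real.pi * (Real.sqrt 2 + 1 / 2) * s) := by linarith
      _ = Real.pi * (Real.sqrt 2 + 1 / 2) * (2 * s) := by ring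
  · rw [div_le_div_iff₀ hden1 hden2, hx2sc]
    exact zhu_key2 s c hs0 hsc (Real.cos_le_one φ) hpyth
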